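/- For fixed c > 0 and fixed r > 0, the function g(w) = w·ln(1 + c/(w + r)) is strictly increasing and concave in w on (0, ∞). -/

import Mathlib

open Real

/-- For fixed `c, r > 0`, the function `g(w) = w · ln(1 + c/(w + r))` is strictly
increasing and concave on `(0, ∞)`. -/
theorem stmt12 (c r : ℝ) (hc : 0 < c) (hr : 0 < r) :
    StrictMonoOn (fun w => w * Real.log (1 + c / (w + r))) (Set.Ioi 0) ∧
    ConcaveOn ℝ (Set.Ioi 0) (fun w => w * Real.log (1 + c / (w + r))) := by
  set g : ℝ → ℝ := fun w => w * Real.log (1 + c / (w + r)) with hg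
  set f' : ℝ → ℝ := fun w =>
    (Real.log (w + r + c) - Real.log (w + r)) -
      c * (w / ((w + r) * (w + r + c))) with hf'
  -- positivity facts
  have hu : ∀ w : ℝ, w ∈ Set.Ioi (0:ℝ) → 0 < w + r := fun w hw => by
    have : (0:ℝ) < w := hw
    linarith
  have hv : ∀ w : ℝ, w ∈ Set.Ioi (0:ℝ) → 0 < w + r + c := fun w hw => by
    have := hu w hw; linarith
  -- g rewritten
  have hval : ∀ w ∈ Set.Ioi (0:ℝ),
      g w = w * (Real.log (w + r + c) - Real.log (w + r)) := by
    intro w hw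
    have h1 : 0 < w + r := hu w hw
    have : 1 + c / (w + r) = (w + r + c) / (w + r) := by
      field_simp
    rw [hg]
    simp only [this]
    rw [Real.log_div (by positivity) (ne_of_gt h1)]
  -- derivative of g at each point of Ioi 0
  have hderiv : ∀ w ∈ Set.Ioi (0:ℝ), HasDerivAt g (f' w) w := by
    intro w hw
    have h1 : 0 < w + r := hu w hw
    have h2 : 0 < w + r + c := hv w hw
    have hu' : HasDerivAt (fun x : ℝ => x + r) 1 w := (hasDerivAt_id w).add_const r
    have hv' : HasDerivAt (fun x : ℝ => x + r + c) 1 w := hu'.add_const c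
    have hlogv : HasDerivAt (fun x : ℝ => Real.log (x + r + c)) (1 / (w + r + c)) w :=
      hv'.log (ne_of_gt h2)
    have hlogu : HasDerivAt (fun x : ℝ => Real.log (x + r)) (1 / (w + r)) w :=
      hu'.log (ne_of_gt h1)
    have hL : HasDerivAt (fun x : ℝ => Real.log (x + r + c) - Real.log (x + r))
        (1 / (w + r + c) - 1 / (w + r)) w := hlogv.sub hlogu
    have hmul : HasDerivAt
        (fun x : ℝ => x * (Real.log (x + r + c) - Real.log (x + r)))
        (1 * (Real.log (w + r + c) - Real.log (w + r)) +
          w * (1 / (w + r + c) - 1 / (w + r))) w :=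
      (hasDerivAt_id w).mul hL
    have heq : (fun x : ℝ => x * (Real.log (x + r + c) - Real.log (x + r))) =ᶠ[nhds w] g := by
      filter_upwards [IsOpen.mem_nhds isOpen_Ioi hw] with x hx
      exact (hval x hx).symm
    have hg' : HasDerivAt g
        (1 * (Real.log (w + r + c) - Real.log (w + r)) +
          w * (1 / (w + r + c) - 1 / (w + r))) w := hmul.congr_of_eventuallyEq heq.symm
    convert hg' using 1
    rw [hf']
    field_simp
    ring
  -- derivative of f' at each point of Ioi 0
  have hderiv2 : ∀ w ∈ Set.Ioi (0:ℝ), HasDerivAt f'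
      ((1 / (w + r + c) - 1 / (w + r)) -
        c * ((1 * ((w + r) * (w + r + c)) - w * (1 * (w + r + c) + (w + r) * 1)) /
          ((w + r) * (w + r + c)) ^ 2)) w := by
    intro w hw
    have h1 : 0 < w + r := hu w hw
    have h2 : 0 < w + r + c := hv w hw
    have hu' : HasDerivAt (fun x : ℝ => x + r) 1 w := (hasDerivAt_id w).add_const r
    have hv' : HasDerivAt (fun x : ℝ => x + r + c) 1 w := hu'.add_const c
    have hlogv : HasDerivAt (fun x : ℝ => Real.log (x + r + c)) (1 / (w + r + c)) w :=
      hv'.log (ne_of_gt h2)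
    have hlogu : HasDerivAt (fun x : ℝ => Real.log (x + r)) (1 / (w + r)) w :=
      hu'.log (ne_of_gt h1)
    have hd : HasDerivAt (fun x : ℝ => (x + r) * (x + r + c))
        (1 * (w + r + c) + (w + r) * 1) w := hu'.mul hv'
    have hq : HasDerivAt (fun x : ℝ => x / ((x + r) * (x + r + c)))
        ((1 * ((w + r) * (w + r + c)) - w * (1 * (w + r + c) + (w + r) * 1)) /
          ((w + r) * (w + r + c)) ^ 2) w :=
      (hasDerivAt_id w).div hd (by positivity)
    exact (hlogv.sub hlogu).sub (hq.const_mul c)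
  -- deriv g = f' on Ioi 0, and positivity of f'
  have hderiv_eq : ∀ w ∈ Set.Ioi (0:ℝ), deriv g w = f' w := fun w hw =>
    (hderiv w hw).deriv
  have hfpos : ∀ w ∈ Set.Ioi (0:ℝ), 0 < f' w := by
    intro w hw
    have hw0 : (0:ℝ) < w := hw
    have h1 : 0 < w + r := hu w hw
    have h2 : 0 < w + r + c := hv w hw
    -- log((w+r)/(w+r+c)) < (w+r)/(w+r+c) - 1
    have hlt : Real.log ((w + r) / (w + r + c)) < (w + r) / (w + r + c) - 1 :=
      Real.log_lt_sub_one_of_pos (by positivity)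
        (by
          intro h
          have := (div_eq_one_iff_eq (ne_of_gt h2)).mp h
          linarith)
    rw [Real.log_div (ne_of_gt h1) (ne_of_gt h2)] at hlt
    have hkey : Real.log (w + r + c) - Real.log (w + r) > c / (w + r + c) := by
      have : (w + r) / (w + r + c) - 1 = -(c / (w + r + c)) := by
        field_simp
        ring
      linarith [hlt, this ▸ hlt]
    have hlast : c / (w + r + c) > c * (w / ((w + r) * (w + r + c))) := by
      rw [gt_iff_lt, mul_div_assoc', div_lt_div_iff₀ (by positivity) h2]
      nlinarith [mul_pos (mul_pos hc h2) hr]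
    rw [hf']
    simp only
    linarith
  -- continuity of g on Ioi 0
  have hcont : ContinuousOn g (Set.Ioi 0) := fun w hw =>
    ((hderiv w hw).differentiableAt.continuousAt).continuousWithinAt
  have hint : interior (Set.Ioi (0:ℝ)) = Set.Ioi 0 := interior_Ioi
  constructor
  · exact strictMonoOn_of_deriv_pos (convex_Ioi 0) hcont
      (fun x hx => by
        rw [hint] at hx
        rw [hderiv_eq x hx]; exact hfpos x hx)
  · apply concaveOn_of_deriv2_nonpos (convex_Ioi 0) hcont
    · intro x hx
      rw [hint] at hx
      exact (hderiv x hx).differentiableAt.differentiableWithinAt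
    · intro x hx
      rw [hint] at hx
      have : deriv g =ᶠ[nhds x] f' := by
        filter_upwards [IsOpen.mem_nhds isOpen_Ioi hx] with y hy
        exact hderiv_eq y hy
      exact ((hderiv2 x hx).differentiableAt.congr_of_eventuallyEq this).differentiableWithinAt
    · intro x hx
      rw [hint] at hx
      have h1 : 0 < x + r := hu x hx
      have h2 : 0 < x + r + c := hv x hx
      have heq : deriv g =ᶠ[nhds x] f' := by
        filter_upwards [IsOpen.mem_nhds isOpen_Ioi hx] with y hy
        exact hderiv_eq y hy
      have : deriv^[2] g x = deriv f' x := by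
        simp only [Function.iterate_succ, Function.iterate_zero, Function.comp_apply, id]
        exact Filter.EventuallyEq.deriv_eq heq
      rw [this, (hderiv2 x hx).deriv]
      have hnum : (1 / (x + r + c) - 1 / (x + r)) -
          c * ((1 * ((x + r) * (x + r + c)) - x * (1 * (x + r + c) + (x + r) * 1)) /
            ((x + r) * (x + r + c)) ^ 2)
          = -(c * (2 * x * r + 2 * r ^ 2 + x * c + 2 * r * c)) /
            ((x + r) * (x + r + c)) ^ 2 := by
        field_simp
        ring
      rw [hnum]
      have hx0 : (0:ℝ) < x := hx
      apply div_nonpos_of_nonpos_of_nonneg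
      · nlinarith [mul_pos (mul_pos hc hx0) hr, mul_pos (mul_pos hc hr) hr,
          mul_pos (mul_pos hx0 hc) hc, mul_pos (mul_pos hr hc) hc]
      · positivity
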